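/- The tangent map of the Newton–Picard map is the Newton–Picard map of the tangent map: let x₁ ∈ U₀(δ) and let ξ₁ ∈ X satisfy ‖ξ₁‖ < δ/(8(1 + ‖id_X − Q∘D‖)) and ‖df(x₁)ξ₁‖ < δ/(4c). Set x := 𝒩(x₁) and ξ := d𝒩(x₁)ξ₁. Then (x, ξ) is the unique pair in X × X satisfying: f(x) = 0, df(x)ξ = 0, x − x₁ ∈ range Q, ξ − ξ₁ ∈ range Q, and max{‖x − x₀‖, (δ̂/δ)·‖ξ‖} < δ. Moreover max{‖x − x₁‖, (δ̂/δ)·‖ξ − ξ₁‖} ≤ 2c · max{‖f(x₁)‖, (δ̂/δ)·‖df(x₁)ξ₁‖}. -/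

import Mathlib

set_option maxHeartbeats 1000000 in
/-- **The tangent map of the Newton–Picard map is the Newton–Picard map of the
tangent map.** In the setting of the Newton–Picard map for a twice
continuously differentiable `f` (with `‖df(x) - D‖ ≤ 1/(4c)` and
`‖d²f(x)‖ ≤ c₂` on `B_δ(x₀)`, `δ̂ := min{δ, 1/(4cc₂)}`): let `x₁ ∈ U₀(δ)` and
let `ξ₁` satisfy `‖ξ₁‖ < δ/(8(1 + ‖id - Q∘D‖))` and `‖df(x₁)ξ₁‖ < δ/(4c)`.
Set `x := 𝒩(x₁)` and `ξ := d𝒩(x₁)ξ₁`.  Then `(x, ξ)` is the unique pair with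
`f(x) = 0`, `df(x)ξ = 0`, `x - x₁ ∈ range Q`, `ξ - ξ₁ ∈ range Q`, and
`max{‖x - x₀‖, (δ̂/δ)‖ξ‖} < δ`; moreover
`max{‖x - x₁‖, (δ̂/δ)‖ξ - ξ₁‖} ≤ 2c · max{‖f(x₁)‖, (δ̂/δ)‖df(x₁)ξ₁‖}`. -/
theorem newton_picard_tangent_map_identification
    {X Y : Type*} [NormedAddCommGroup X] [NormedSpace ℝ X] [CompleteSpace X]
    [NormedAddCommGroup Y] [NormedSpace ℝ Y] [CompleteSpace Y]
    (U : Set X) (hU : IsOpen U)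
    (f : X → Y) (f' : X → X →L[ℝ] Y) (f'' : X → X →L[ℝ] X →L[ℝ] Y)
    (hf : ∀ x ∈ U, HasFDerivAt f (f' x) x)
    (hf' : ∀ x ∈ U, HasFDerivAt f' (f'' x) x)
    (hf''cont : ContinuousOn f'' U)
    (x₀ : X) (hx₀ : x₀ ∈ U)
    (Q : Y →L[ℝ] X)
    (hQ : (f' x₀).comp Q = ContinuousLinearMap.id ℝ Y)
    (δ c c₂ : ℝ) (hδ : 0 < δ) (hc : 0 < c) (hc₂ : 0 < c₂)
    (hQnorm : ‖Q‖ ≤ c)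
    (hball : Metric.ball x₀ δ ⊆ U)
    (hsmall : ∀ x : X, ‖x - x₀‖ < δ → ‖f' x - f' x₀‖ ≤ 1 / (4 * c))
    (hc₂bound : ∀ x : X, ‖x - x₀‖ < δ → ‖f'' x‖ ≤ c₂)
    (δhat : ℝ) (hδhat : δhat = min δ (1 / (4 * c * c₂)))
    (U₀ : Set X) (hU₀ : U₀ = {x₁ : X | ‖x₁ - x₀‖ < δ / 8 ∧ ‖f x₁‖ < δ / (4 * c)})
    (N : X → X) (N' : X → X →L[ℝ] X)
    (hN : ∀ x₁ ∈ U₀, f (N x₁) = 0 ∧ N x₁ - x₁ ∈ Set.range Q ∧ ‖N x₁ - x₀‖ < δ)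
    (hNderiv : ∀ x₁ ∈ U₀, HasFDerivAt N (N' x₁) x₁)
    (hN' : ∀ x₁ ∈ U₀,
      (ContinuousLinearMap.id ℝ X + Q.comp (f' x₁) - Q.comp (f' x₀)).comp (N' x₁) =
        ContinuousLinearMap.id ℝ X - Q.comp (f' x₀))
    (x₁ : X) (hx₁ : x₁ ∈ U₀) (ξ₁ : X)
    (hξ₁ : ‖ξ₁‖ < δ / (8 * (1 + ‖ContinuousLinearMap.id ℝ X - Q.comp (f' x₀)‖)))
    (hξ₁' : ‖f' x₁ ξ₁‖ < δ / (4 * c)) :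
    (f (N x₁) = 0 ∧ f' (N x₁) (N' x₁ ξ₁) = 0 ∧
      N x₁ - x₁ ∈ Set.range Q ∧ N' x₁ ξ₁ - ξ₁ ∈ Set.range Q ∧
      max ‖N x₁ - x₀‖ ((δhat / δ) * ‖N' x₁ ξ₁‖) < δ) ∧
    (∀ x ξ : X, f x = 0 → f' x ξ = 0 →
      x - x₁ ∈ Set.range Q → ξ - ξ₁ ∈ Set.range Q →
      max ‖x - x₀‖ ((δhat / δ) * ‖ξ‖) < δ →
      x = N x₁ ∧ ξ = N' x₁ ξ₁) ∧
    max ‖N x₁ - x₁‖ ((δhat / δ) * ‖N' x₁ ξ₁ - ξ₁‖) ≤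
      2 * c * max ‖f x₁‖ ((δhat / δ) * ‖f' x₁ ξ₁‖) := by
  -- unpack membership in U₀
  have hx₁' := hx₁
  rw [hU₀] at hx₁'
  obtain ⟨hx₁n, hfx₁n⟩ := hx₁'
  have hx₁ball : x₁ ∈ Metric.ball x₀ δ := by
    rw [Metric.mem_ball, dist_eq_norm]; linarith
  have hx₁U : x₁ ∈ U := hball hx₁ball
  obtain ⟨hfx, hxrange, hxball⟩ := hN x₁ hx₁
  have hxball' : N x₁ ∈ Metric.ball x₀ δ := by
    rw [Metric.mem_ball, dist_eq_norm]; exact hxball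
  have hxU : N x₁ ∈ U := hball hxball'
  -- pointwise right inverse
  have hQDy : ∀ y : Y, f' x₀ (Q y) = y := by
    intro y
    have := ContinuousLinearMap.ext_iff.mp hQ y
    simpa using this
  have hQfix : ∀ v ∈ Set.range Q, Q (f' x₀ v) = v := by
    rintro _ ⟨y, rfl⟩; rw [hQDy]
  have hQle : ∀ v : Y, ‖Q v‖ ≤ c * ‖v‖ := fun v =>
    (Q.le_opNorm v).trans (mul_le_mul_of_nonneg_right hQnorm (norm_nonneg v))
  -- mean value estimate
  have hmvt : ∀ a ∈ Metric.ball x₀ δ, ∀ b ∈ Metric.ball x₀ δ,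
      ‖f b - f a - f' x₀ (b - a)‖ ≤ 1 / (4 * c) * ‖b - a‖ := by
    intro a ha b hb
    have h := Convex.norm_image_sub_le_of_norm_hasFDerivWithin_le
      (f := fun z => f z - f' x₀ z) (f' := fun z => f' z - f' x₀)
      (s := Metric.ball x₀ δ) (C := 1 / (4 * c))
      (fun z hz => ((hf z (hball hz)).sub ((f' x₀).hasFDerivAt)).hasFDerivWithinAt)
      (fun z hz => hsmall z (by rwa [← dist_eq_norm, ← Metric.mem_ball]))
      (convex_ball x₀ δ) ha hb
    have heq : f b - f' x₀ b - (f a - f' x₀ a) = f b - f a - f' x₀ (b - a) := by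
      rw [map_sub]; abel
    rwa [heq] at h
  -- small operator estimates
  have hsm1 : ∀ v : X, ‖(f' x₀ - f' x₁) v‖ ≤ 1 / (4 * c) * ‖v‖ := by
    intro v
    refine ((f' x₀ - f' x₁).le_opNorm v).trans
      (mul_le_mul_of_nonneg_right ?_ (norm_nonneg v))
    rw [norm_sub_rev]; exact hsmall x₁ (by linarith)
  have hsm2 : ∀ v : X, ‖(f' x₀ - f' (N x₁)) v‖ ≤ 1 / (4 * c) * ‖v‖ := by
    intro v
    refine ((f' x₀ - f' (N x₁)).le_opNorm v).trans
      (mul_le_mul_of_nonneg_right ?_ (norm_nonneg v))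
    rw [norm_sub_rev]; exact hsmall (N x₁) hxball
  have hcinv : c * (1 / (4 * c)) = 1 / 4 := by
    field_simp
  -- Step A : ‖N x₁ - x₁‖ ≤ 2 c ‖f x₁‖
  have hA : ‖N x₁ - x₁‖ ≤ 2 * c * ‖f x₁‖ := by
    have h1 : ‖f' x₀ (N x₁ - x₁) + f x₁‖ ≤ 1 / (4 * c) * ‖N x₁ - x₁‖ := by
      have h := hmvt x₁ hx₁ball (N x₁) hxball'
      rw [hfx] at h
      calc ‖f' x₀ (N x₁ - x₁) + f x₁‖
          = ‖0 - f x₁ - f' x₀ (N x₁ - x₁)‖ := by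
            rw [← norm_neg]; congr 1; abel
        _ ≤ 1 / (4 * c) * ‖N x₁ - x₁‖ := h
    have h2 : N x₁ - x₁ = Q (f' x₀ (N x₁ - x₁) + f x₁) - Q (f x₁) := by
      rw [map_add, hQfix _ hxrange]; abel
    have h3 : ‖N x₁ - x₁‖ ≤ c * (1 / (4 * c) * ‖N x₁ - x₁‖) + c * ‖f x₁‖ :=
      calc ‖N x₁ - x₁‖ = ‖Q (f' x₀ (N x₁ - x₁) + f x₁) - Q (f x₁)‖ := congrArg norm h2
        _ ≤ ‖Q (f' x₀ (N x₁ - x₁) + f x₁)‖ + ‖Q (f x₁)‖ := norm_sub_le _ _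
        _ ≤ c * (1 / (4 * c) * ‖N x₁ - x₁‖) + c * ‖f x₁‖ :=
            add_le_add ((hQle _).trans (mul_le_mul_of_nonneg_left h1 hc.le)) (hQle _)
    rw [← mul_assoc, hcinv] at h3
    linarith [mul_nonneg hc.le (norm_nonneg (f x₁))]
  -- Step B : chain rule, f'(x) ∘ N'(x₁) = 0
  have hfN0 : ∀ᶠ y in nhds x₁, f (N y) = 0 := by
    have hcf : ContinuousAt f x₁ := (hf x₁ hx₁U).continuousAt
    have h1 : ∀ᶠ y in nhds x₁, y ∈ Metric.ball x₀ (δ / 8) :=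
      Metric.isOpen_ball.eventually_mem (by rw [Metric.mem_ball, dist_eq_norm]; exact hx₁n)
    have h2 : ∀ᶠ y in nhds x₁, f y ∈ Metric.ball (0 : Y) (δ / (4 * c)) := by
      have hmem : Metric.ball (0 : Y) (δ / (4 * c)) ∈ nhds (f x₁) :=
        Metric.isOpen_ball.mem_nhds (by rw [Metric.mem_ball, dist_zero_right]; exact hfx₁n)
      exact hcf.preimage_mem_nhds hmem
    filter_upwards [h1, h2] with y hy1 hy2
    have hyU₀ : y ∈ U₀ := by
      rw [hU₀]
      refine ⟨?_, ?_⟩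
      · rw [Metric.mem_ball, dist_eq_norm] at hy1; exact hy1
      · rw [Metric.mem_ball, dist_zero_right] at hy2; exact hy2
    exact (hN y hyU₀).1
  have hcomp0 : (f' (N x₁)).comp (N' x₁) = 0 := by
    have hd : HasFDerivAt (f ∘ N) ((f' (N x₁)).comp (N' x₁)) x₁ :=
      (hf _ hxU).comp x₁ (hNderiv x₁ hx₁)
    have heq : f ∘ N =ᶠ[nhds x₁] (fun _ => (0 : Y)) := hfN0
    have hd0 : HasFDerivAt (f ∘ N) (0 : X →L[ℝ] Y) x₁ :=
      (hasFDerivAt_const (0 : Y) x₁).congr_of_eventuallyEq heq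
    exact hd.unique hd0
  have hξ0 : f' (N x₁) (N' x₁ ξ₁) = 0 := by
    have := ContinuousLinearMap.ext_iff.mp hcomp0 ξ₁
    simpa using this
  -- Step C : the linear equation for ξ := N' x₁ ξ₁
  have hAξ : N' x₁ ξ₁ + Q (f' x₁ (N' x₁ ξ₁)) - Q (f' x₀ (N' x₁ ξ₁))
      = ξ₁ - Q (f' x₀ ξ₁) := by
    have := ContinuousLinearMap.ext_iff.mp (hN' x₁ hx₁) ξ₁
    simpa [ContinuousLinearMap.comp_apply, ContinuousLinearMap.add_apply,
      ContinuousLinearMap.sub_apply] using this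
  -- two useful rearrangements
  have hdiff1 : N' x₁ ξ₁ = (ξ₁ - Q (f' x₀ ξ₁)) + Q ((f' x₀ - f' x₁) (N' x₁ ξ₁)) := by
    have h2 : N' x₁ ξ₁ - ((ξ₁ - Q (f' x₀ ξ₁)) + Q ((f' x₀ - f' x₁) (N' x₁ ξ₁)))
        = (N' x₁ ξ₁ + Q (f' x₁ (N' x₁ ξ₁)) - Q (f' x₀ (N' x₁ ξ₁))) - (ξ₁ - Q (f' x₀ ξ₁)) := by
      simp only [ContinuousLinearMap.sub_apply, map_sub]; abel
    rw [hAξ, sub_self] at h2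
    exact sub_eq_zero.mp h2
  have hdiff2 : N' x₁ ξ₁ - ξ₁
      = Q ((f' x₀ - f' x₁) (N' x₁ ξ₁ - ξ₁)) - Q (f' x₁ ξ₁) := by
    have h2 : (N' x₁ ξ₁ - ξ₁) - (Q ((f' x₀ - f' x₁) (N' x₁ ξ₁ - ξ₁)) - Q (f' x₁ ξ₁))
        = (N' x₁ ξ₁ + Q (f' x₁ (N' x₁ ξ₁)) - Q (f' x₀ (N' x₁ ξ₁))) - (ξ₁ - Q (f' x₀ ξ₁)) := by
      simp only [ContinuousLinearMap.sub_apply, map_sub]; abel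
    rw [hAξ, sub_self] at h2
    exact sub_eq_zero.mp h2
  -- membership of ξ - ξ₁ in range Q
  have hξrange : N' x₁ ξ₁ - ξ₁ ∈ Set.range Q :=
    ⟨(f' x₀ - f' x₁) (N' x₁ ξ₁ - ξ₁) - f' x₁ ξ₁, by rw [map_sub, ← hdiff2]⟩
  -- norm bound on ξ
  set tn : ℝ := ‖ContinuousLinearMap.id ℝ X - Q.comp (f' x₀)‖ with htn
  have htn0 : 0 ≤ tn := norm_nonneg _
  have hTle : ‖ξ₁ - Q (f' x₀ ξ₁)‖ ≤ tn * ‖ξ₁‖ := by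
    have : ξ₁ - Q (f' x₀ ξ₁) = (ContinuousLinearMap.id ℝ X - Q.comp (f' x₀)) ξ₁ := by
      simp [ContinuousLinearMap.sub_apply]
    rw [this]
    exact (ContinuousLinearMap.id ℝ X - Q.comp (f' x₀)).le_opNorm ξ₁
  have hξnorm : ‖N' x₁ ξ₁‖ < δ / 6 := by
    have h1 : ‖N' x₁ ξ₁‖ ≤ tn * ‖ξ₁‖ + c * (1 / (4 * c) * ‖N' x₁ ξ₁‖) :=
      calc ‖N' x₁ ξ₁‖ = ‖(ξ₁ - Q (f' x₀ ξ₁)) + Q ((f' x₀ - f' x₁) (N' x₁ ξ₁))‖ :=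
            congrArg norm hdiff1
        _ ≤ ‖ξ₁ - Q (f' x₀ ξ₁)‖ + ‖Q ((f' x₀ - f' x₁) (N' x₁ ξ₁))‖ := norm_add_le _ _
        _ ≤ tn * ‖ξ₁‖ + c * (1 / (4 * c) * ‖N' x₁ ξ₁‖) :=
            add_le_add hTle ((hQle _).trans (mul_le_mul_of_nonneg_left (hsm1 _) hc.le))
    rw [← mul_assoc, hcinv] at h1
    have h2 : ‖ξ₁‖ * (8 * (1 + tn)) < δ := (lt_div_iff₀ (by positivity)).mp hξ₁
    have h3 : tn * ‖ξ₁‖ < δ / 8 := by nlinarith [norm_nonneg ξ₁, htn0]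
    linarith
  -- δhat facts
  have hdhatpos : 0 < δhat := by
    rw [hδhat]; exact lt_min hδ (by positivity)
  have hδhatle : δhat ≤ δ := by rw [hδhat]; exact min_le_left _ _
  have hratio0 : 0 ≤ δhat / δ := by positivity
  have hratio1 : δhat / δ ≤ 1 := by
    rw [div_le_one hδ]; exact hδhatle
  have hξscaled : δhat / δ * ‖N' x₁ ξ₁‖ < δ := by
    calc δhat / δ * ‖N' x₁ ξ₁‖ ≤ 1 * ‖N' x₁ ξ₁‖ :=
          mul_le_mul_of_nonneg_right hratio1 (norm_nonneg _)
      _ = ‖N' x₁ ξ₁‖ := one_mul _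
      _ < δ := by linarith
  refine ⟨⟨hfx, hξ0, hxrange, hξrange, max_lt hxball hξscaled⟩, ?_, ?_⟩
  · -- uniqueness
    intro x' ξ' hfx' hfξ' hxr' hξr' hmax'
    have hx'ball : x' ∈ Metric.ball x₀ δ := by
      rw [Metric.mem_ball, dist_eq_norm]
      exact lt_of_le_of_lt (le_max_left _ _) hmax'
    have hxeq : x' = N x₁ := by
      have hd : x' - N x₁ ∈ Set.range Q := by
        obtain ⟨y1, hy1⟩ := hxr'
        obtain ⟨y2, hy2⟩ := hxrange
        exact ⟨y1 - y2, by rw [map_sub, hy1, hy2]; abel⟩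
      have hDd : ‖f' x₀ (x' - N x₁)‖ ≤ 1 / (4 * c) * ‖x' - N x₁‖ := by
        have h := hmvt (N x₁) hxball' x' hx'ball
        rw [hfx, hfx'] at h
        calc ‖f' x₀ (x' - N x₁)‖ = ‖0 - 0 - f' x₀ (x' - N x₁)‖ := by
              rw [← norm_neg]; congr 1; abel
          _ ≤ 1 / (4 * c) * ‖x' - N x₁‖ := h
      have h4 : ‖x' - N x₁‖ ≤ c * (1 / (4 * c) * ‖x' - N x₁‖) := by
        calc ‖x' - N x₁‖ = ‖Q (f' x₀ (x' - N x₁))‖ := by rw [hQfix _ hd]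
          _ ≤ c * ‖f' x₀ (x' - N x₁)‖ := hQle _
          _ ≤ c * (1 / (4 * c) * ‖x' - N x₁‖) :=
              mul_le_mul_of_nonneg_left hDd hc.le
      rw [← mul_assoc, hcinv] at h4
      have h5 : ‖x' - N x₁‖ = 0 := le_antisymm (by linarith) (norm_nonneg _)
      rw [norm_eq_zero, sub_eq_zero] at h5
      exact h5
    subst hxeq
    refine ⟨rfl, ?_⟩
    have he : ξ' - N' x₁ ξ₁ ∈ Set.range Q := by
      obtain ⟨y1, hy1⟩ := hξr'
      obtain ⟨y2, hy2⟩ := hξrange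
      exact ⟨y1 - y2, by rw [map_sub, hy1, hy2]; abel⟩
    have hfe : f' (N x₁) (ξ' - N' x₁ ξ₁) = 0 := by
      rw [map_sub, hfξ', hξ0, sub_zero]
    have hDe : ‖f' x₀ (ξ' - N' x₁ ξ₁)‖ ≤ 1 / (4 * c) * ‖ξ' - N' x₁ ξ₁‖ := by
      have : f' x₀ (ξ' - N' x₁ ξ₁) = (f' x₀ - f' (N x₁)) (ξ' - N' x₁ ξ₁) := by
        rw [ContinuousLinearMap.sub_apply, hfe, sub_zero]
      rw [this]
      exact hsm2 _
    have h4 : ‖ξ' - N' x₁ ξ₁‖ ≤ c * (1 / (4 * c) * ‖ξ' - N' x₁ ξ₁‖) := by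
      calc ‖ξ' - N' x₁ ξ₁‖ = ‖Q (f' x₀ (ξ' - N' x₁ ξ₁))‖ := by rw [hQfix _ he]
        _ ≤ c * ‖f' x₀ (ξ' - N' x₁ ξ₁)‖ := hQle _
        _ ≤ c * (1 / (4 * c) * ‖ξ' - N' x₁ ξ₁‖) :=
            mul_le_mul_of_nonneg_left hDe hc.le
    rw [← mul_assoc, hcinv] at h4
    have h5 : ‖ξ' - N' x₁ ξ₁‖ = 0 := le_antisymm (by linarith) (norm_nonneg _)
    rw [norm_eq_zero, sub_eq_zero] at h5
    exact h5
  · -- quantitative bound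
    have hB : ‖N' x₁ ξ₁ - ξ₁‖ ≤ 2 * c * ‖f' x₁ ξ₁‖ := by
      have h1 : ‖N' x₁ ξ₁ - ξ₁‖ ≤ c * (1 / (4 * c) * ‖N' x₁ ξ₁ - ξ₁‖) + c * ‖f' x₁ ξ₁‖ :=
        calc ‖N' x₁ ξ₁ - ξ₁‖
            = ‖Q ((f' x₀ - f' x₁) (N' x₁ ξ₁ - ξ₁)) - Q (f' x₁ ξ₁)‖ := congrArg norm hdiff2
          _ ≤ ‖Q ((f' x₀ - f' x₁) (N' x₁ ξ₁ - ξ₁))‖ + ‖Q (f' x₁ ξ₁)‖ := norm_sub_le _ _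
          _ ≤ c * (1 / (4 * c) * ‖N' x₁ ξ₁ - ξ₁‖) + c * ‖f' x₁ ξ₁‖ :=
              add_le_add ((hQle _).trans (mul_le_mul_of_nonneg_left (hsm1 _) hc.le)) (hQle _)
      rw [← mul_assoc, hcinv] at h1
      linarith [mul_nonneg hc.le (norm_nonneg (f' x₁ ξ₁))]
    refine max_le ?_ ?_
    · calc ‖N x₁ - x₁‖ ≤ 2 * c * ‖f x₁‖ := hA
        _ ≤ 2 * c * max ‖f x₁‖ (δhat / δ * ‖f' x₁ ξ₁‖) :=
            mul_le_mul_of_nonneg_left (le_max_left _ _) (by positivity)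
    · calc δhat / δ * ‖N' x₁ ξ₁ - ξ₁‖ ≤ δhat / δ * (2 * c * ‖f' x₁ ξ₁‖) :=
            mul_le_mul_of_nonneg_left hB hratio0
        _ = 2 * c * (δhat / δ * ‖f' x₁ ξ₁‖) := by ring
        _ ≤ 2 * c * max ‖f x₁‖ (δhat / δ * ‖f' x₁ ξ₁‖) :=
            mul_le_mul_of_nonneg_left (le_max_right _ _) (by positivity)
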